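/- arXiv:1604.01470 — 2 statements merged into one kernel-verified Lean document; each statement's English description precedes it below -/
import Mathlib

section
/- Every x ∈ U satisfies limsup_{n→∞} (−log_β |I_n(x)|)/n = 1 + λ(β); that is, U ⊂ E where E = {x ∈ (0,1] : limsup_{n→∞} (−log_β |I_n(x)|)/n = 1 + λ(β)}. -/
open MeasureTheory Filter Set

noncomputable section

/-- The β-transformation on `(0,1]`: `T_β x = βx − ⌈βx⌉ + 1`. -/
def Tbeta (β x : ℝ) : ℝ := β * x - ⌈β * x⌉ + 1

/-- The digits of the β-expansion, 0-indexed: `eps β x n` is the `(n+1)`-st digit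
`ε_{n+1}(x,β) = ⌈β T_β^n x⌉ − 1`. -/
def eps (β x : ℝ) (n : ℕ) : ℤ := ⌈β * (Tbeta β)^[n] x⌉ - 1

/-- The basic interval of order `n` containing `x`:
all `y ∈ (0,1]` whose first `n` digits agree with those of `x`. -/
def In (β x : ℝ) (n : ℕ) : Set ℝ := {y ∈ Ioc (0:ℝ) 1 | ∀ j < n, eps β y j = eps β x j}

/-- The length of a set (Lebesgue measure). -/
def len (s : Set ℝ) : ℝ := (volume s).toReal

/-- `tseq β n = t_n`: the maximal length of the block of zero digits of the
β-expansion of `1` immediately following position `n` (digits `ε*_{n+1},…,ε*_{n+k}`). -/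
def tseq (β : ℝ) (n : ℕ) : ℕ := sSup {k : ℕ | ∀ j < k, eps β 1 (n + j) = 0}

/-- `Gam β n = Γ_n = max_{1 ≤ k ≤ n} t_k`. -/
def Gam (β : ℝ) (n : ℕ) : ℕ := Finset.sup (Finset.Icc 1 n) (tseq β)

/-- `lam β = λ(β) = limsup_n Γ_n / n`. -/
def lam (β : ℝ) : ℝ := Filter.limsup (fun n : ℕ => (Gam β n : ℝ) / n) atTop

/-- `kstar β x n = k_n^*(x)`: the smallest `k ≥ 0` such that
`(ε_{k+1}(x),…,ε_n(x)) = (ε*_1,…,ε*_{n−k})`. -/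
def kstar (β x : ℝ) (n : ℕ) : ℕ := sInf {k : ℕ | ∀ i < n - k, eps β x (k + i) = eps β 1 i}

/-- `tau β x = τ(x) = limsup_n t_{n − k_n^*(x)} / n`. -/
def tau (β x : ℝ) : ℝ :=
  Filter.limsup (fun n : ℕ => (tseq β (n - kstar β x n) : ℝ) / n) atTop

/-- The upper density `\overline{D}(x) = limsup_n (−log_β |I_n(x)|)/n`. -/
def upperD (β x : ℝ) : ℝ :=
  Filter.limsup (fun n : ℕ => -Real.logb β (len (In β x n)) / n) atTop

/-- The lower density `\underline{D}(x) = liminf_n (−log_β |I_n(x)|)/n`. -/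
def lowerD (β x : ℝ) : ℝ :=
  Filter.liminf (fun n : ℕ => -Real.logb β (len (In β x n)) / n) atTop

/-- The basic interval (cylinder) associated to a finite word `w` of digits:
all `x ∈ (0,1]` whose β-expansion starts with `w`. -/
def cyl (β : ℝ) (w : List ℤ) : Set ℝ :=
  {x ∈ Ioc (0:ℝ) 1 | ∀ j < w.length, eps β x j = w.getD j 0}

/-- A finite word is admissible if it occurs as the initial digits of some `x ∈ (0,1]`. -/
def Admissible (β : ℝ) (w : List ℤ) : Prop := (cyl β w).Nonempty

/-- A basic interval is full if its length is `β^{−n}` where `n` is the order. -/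
def IsFull (β : ℝ) (w : List ℤ) : Prop := len (cyl β w) = β ^ (-(w.length : ℤ))

/-- The word `(ε*_1,…,ε*_n)` of the first `n` digits of the β-expansion of `1`. -/
def estarWord (β : ℝ) (n : ℕ) : List ℤ := (List.range n).map (eps β 1)

/-- The interior of a set relative to the subspace `[0,1]`
(for `S ⊆ [0,1]` this is exactly the interior of `S` in the topology of `[0,1]`). -/
def intIn01 (S : Set ℝ) : Set ℝ := Icc 0 1 \ closure (Icc 0 1 \ S)


lemma Tbeta_mem (β x : ℝ) : Tbeta β x ∈ Ioc (0:ℝ) 1 := by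
  unfold Tbeta
  constructor
  · have := Int.ceil_lt_add_one (β * x); linarith
  · have := Int.le_ceil (β * x); linarith

lemma iter_mem (β x : ℝ) (hx : x ∈ Ioc (0:ℝ) 1) (n : ℕ) : (Tbeta β)^[n] x ∈ Ioc (0:ℝ) 1 := by
  induction n with
  | zero => simpa using hx
  | succ n ih => rw [Function.iterate_succ_apply']; exact Tbeta_mem _ _

lemma iter_succ (β x : ℝ) (n : ℕ) :
    (Tbeta β)^[n+1] x = β * (Tbeta β)^[n] x - (eps β x n : ℝ) := by
  rw [Function.iterate_succ_apply']
  unfold eps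
  set y := (Tbeta β)^[n] x with hy
  unfold Tbeta
  push_cast
  ring

lemma eps_nonneg (β x : ℝ) (hβ : 0 < β) (hx : x ∈ Ioc (0:ℝ) 1) (n : ℕ) : 0 ≤ eps β x n := by
  have h := iter_mem β x hx n
  have : (0:ℝ) < β * (Tbeta β)^[n] x := mul_pos hβ h.1
  unfold eps
  have := Int.ceil_pos.mpr this
  omega


/-- right endpoint scale of the basic interval -/
def cfun (β x : ℝ) : ℕ → ℝ
  | 0 => 1
  | n+1 => min (β * cfun β x n - (eps β x n : ℝ)) 1

lemma mem_In_succ (β x y : ℝ) (n : ℕ) :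
    y ∈ In β x (n+1) ↔ y ∈ In β x n ∧ eps β y n = eps β x n := by
  constructor
  · rintro ⟨h1, h2⟩
    exact ⟨⟨h1, fun j hj => h2 j (by omega)⟩, h2 n (by omega)⟩
  · rintro ⟨⟨h1, h2⟩, h3⟩
    refine ⟨h1, fun j hj => ?_⟩
    rcases Nat.lt_succ_iff_lt_or_eq.mp hj with h | h
    · exact h2 j h
    · subst h; exact h3

lemma Tn_affine (β x y : ℝ) (n : ℕ) (h : ∀ j < n, eps β y j = eps β x j) :
    (Tbeta β)^[n] y = (Tbeta β)^[n] x - β^n * x + β^n * y := by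
  induction n with
  | zero => simp
  | succ n ih =>
    have ih' := ih (fun j hj => h j (by omega))
    rw [iter_succ, iter_succ, h n (by omega), ih']
    ring

lemma mem_In_iff (β x : ℝ) (hβ : 1 < β) (hx : x ∈ Ioc (0:ℝ) 1) (n : ℕ) (y : ℝ) :
    y ∈ In β x n ↔
      0 < β^n * (y - (x - (Tbeta β)^[n] x / β^n)) ∧
        β^n * (y - (x - (Tbeta β)^[n] x / β^n)) ≤ cfun β x n := by
  have hβ0 : (0:ℝ) < β := by linarith
  induction n with
  | zero =>
    unfold In cfun
    simp only [Function.iterate_zero, id_eq, pow_zero, one_mul, div_one, sub_self, sub_zero,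
      mem_setOf_eq, mem_Ioc, Nat.not_lt_zero, false_implies, implies_true, and_true]
  | succ n ih =>
    have hpn : (0:ℝ) < β ^ n := pow_pos hβ0 n
    have hpn1 : (0:ℝ) < β ^ (n+1) := pow_pos hβ0 (n+1)
    set z : ℝ := β^n * (y - (x - (Tbeta β)^[n] x / β^n)) with hz
    have hz' : β^(n+1) * (y - (x - (Tbeta β)^[n+1] x / β^(n+1)))
        = β * z - (eps β x n : ℝ) := by
      rw [hz, iter_succ]
      field_simp
      ring
    rw [mem_In_succ]
    rw [hz']
    simp only [cfun]
    have hε : (0:ℤ) ≤ eps β x n := eps_nonneg β x hβ0 hx n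
    have hε' : (0:ℝ) ≤ (eps β x n : ℝ) := by exact_mod_cast hε
    constructor
    · rintro ⟨hy, h3⟩
      obtain ⟨h1, h2⟩ := ih.mp hy
      have hTy : (Tbeta β)^[n] y = z := by
        have hmem : y ∈ In β x n := (ih).mpr ⟨h1, h2⟩
        have := Tn_affine β x y n hmem.2
        rw [this, hz]; field_simp; ring
      have hceil : ⌈β * (Tbeta β)^[n] y⌉ = eps β x n + 1 := by
        unfold eps at h3 ⊢; omega
      rw [hTy] at hceil
      have hc1 : ((eps β x n : ℝ)) < β * z := by
        have := Int.ceil_eq_iff.mp hceil -- might need nonzero?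
        push_cast at this
        linarith [this.1]
      have hc2 : β * z ≤ (eps β x n : ℝ) + 1 := by
        have := Int.le_ceil (β * z)
        rw [hceil] at this; push_cast at this; linarith
      refine ⟨by linarith, le_min ?_ (by linarith)⟩
      show β * z - _ ≤ β * cfun β x n - _
      have : β * z ≤ β * cfun β x n := by nlinarith
      linarith
    · rintro ⟨h1, h2⟩
      have hle1 : β * z - (eps β x n : ℝ) ≤ 1 := le_trans h2 (min_le_right _ _)
      have hle2 : β * z - (eps β x n : ℝ) ≤ β * cfun β x n - (eps β x n : ℝ) :=
        le_trans h2 (min_le_left _ _)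
      have hzc : z ≤ cfun β x n := by nlinarith
      have hz0 : 0 < z := by nlinarith
      have hmem : y ∈ In β x n := (ih).mpr ⟨hz0, hzc⟩
      have hTy : (Tbeta β)^[n] y = z := by
        have := Tn_affine β x y n hmem.2
        rw [this, hz]; field_simp; ring
      refine ⟨hmem, ?_⟩
      unfold eps
      rw [hTy]
      have h5 : ⌈β * z⌉ = eps β x n + 1 := by
        rw [Int.ceil_eq_iff]
        push_cast
        constructor <;> linarith
      unfold eps at h5
      omega

lemma self_mem_In (β x : ℝ) (hx : x ∈ Ioc (0:ℝ) 1) (n : ℕ) : x ∈ In β x n :=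
  ⟨hx, fun _ _ => rfl⟩

lemma iter_le_cfun (β x : ℝ) (hβ : 1 < β) (hx : x ∈ Ioc (0:ℝ) 1) (n : ℕ) :
    (Tbeta β)^[n] x ≤ cfun β x n := by
  have h := (mem_In_iff β x hβ hx n x).mp (self_mem_In β x hx n)
  have hpn : (0:ℝ) < β ^ n := pow_pos (by linarith) n
  have hz : β^n * (x - (x - (Tbeta β)^[n] x / β^n)) = (Tbeta β)^[n] x := by
    field_simp
    ring
  rw [hz] at h
  exact h.2

lemma cfun_pos (β x : ℝ) (hβ : 1 < β) (hx : x ∈ Ioc (0:ℝ) 1) (n : ℕ) :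
    0 < cfun β x n :=
  lt_of_lt_of_le (iter_mem β x hx n).1 (iter_le_cfun β x hβ hx n)

lemma cfun_le_one (β x : ℝ) (n : ℕ) : cfun β x n ≤ 1 := by
  cases n with
  | zero => exact le_refl 1
  | succ n => exact min_le_right _ _

lemma In_eq_Ioc (β x : ℝ) (hβ : 1 < β) (hx : x ∈ Ioc (0:ℝ) 1) (n : ℕ) :
    In β x n = Ioc (x - (Tbeta β)^[n] x / β^n)
      (x - (Tbeta β)^[n] x / β^n + cfun β x n / β^n) := by
  have hpn : (0:ℝ) < β ^ n := pow_pos (by linarith) n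
  ext y
  rw [mem_In_iff β x hβ hx n y, mem_Ioc]
  set a := x - (Tbeta β)^[n] x / β^n
  constructor
  · rintro ⟨h1, h2⟩
    constructor
    · nlinarith
    · have : y - a ≤ cfun β x n / β^n := by
        rw [le_div_iff₀ hpn]; nlinarith
      linarith
  · rintro ⟨h1, h2⟩
    constructor
    · nlinarith
    · have : y - a ≤ cfun β x n / β^n := by linarith
      rw [le_div_iff₀ hpn] at this; nlinarith


lemma len_In (β x : ℝ) (hβ : 1 < β) (hx : x ∈ Ioc (0:ℝ) 1) (n : ℕ) :
    len (In β x n) = cfun β x n / β^n := by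
  have hpn : (0:ℝ) < β ^ n := pow_pos (by linarith) n
  have hc : 0 < cfun β x n / β^n := div_pos (cfun_pos β x hβ hx n) hpn
  rw [In_eq_Ioc β x hβ hx n]
  unfold len
  rw [Real.volume_Ioc]
  rw [add_sub_cancel_left]
  exact ENNReal.toReal_ofReal hc.le

lemma one_mem_Ioc01 : (1:ℝ) ∈ Ioc (0:ℝ) 1 := ⟨one_pos, le_refl 1⟩

lemma cfun_exists_iter (β x : ℝ) (hβ : 1 < β) (hx : x ∈ Ioc (0:ℝ) 1) (n : ℕ) :
    ∃ j ≤ n, cfun β x n = (Tbeta β)^[j] 1 := by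
  have hβ0 : (0:ℝ) < β := by linarith
  induction n with
  | zero => exact ⟨0, le_refl 0, by simp [cfun]⟩
  | succ n ih =>
    obtain ⟨j, hj, hcj⟩ := ih
    by_cases h : β * cfun β x n - (eps β x n : ℝ) < 1
    · -- non-full branch: digit must be maximal, c_{n+1} = T^{j+1} 1
      have hT : (Tbeta β)^[n] x ≤ cfun β x n := iter_le_cfun β x hβ hx n
      have hceil : ⌈β * (Tbeta β)^[n] x⌉ ≤ ⌈β * cfun β x n⌉ :=
        Int.ceil_le_ceil (by nlinarith)
      have hlow : (⌈β * cfun β x n⌉ : ℝ) - 1 < β * cfun β x n := by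
        have := Int.ceil_lt_add_one (β * cfun β x n); linarith
      have heps : eps β x n = ⌈β * cfun β x n⌉ - 1 := by
        unfold eps
        by_contra hne
        have h2 : eps β x n ≤ ⌈β * cfun β x n⌉ - 2 := by unfold eps at hne ⊢; omega
        have h2' : (eps β x n : ℝ) ≤ (⌈β * cfun β x n⌉ : ℝ) - 2 := by exact_mod_cast h2
        linarith
      refine ⟨j + 1, by omega, ?_⟩
      have : cfun β x (n+1) = β * cfun β x n - (eps β x n : ℝ) := by
        simp only [cfun]; exact min_eq_left h.le
      rw [this, heps, hcj, Function.iterate_succ_apply']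
      unfold Tbeta
      push_cast
      ring
    · refine ⟨0, by omega, ?_⟩
      simp only [cfun, Function.iterate_zero, id_eq]
      exact min_eq_right (by linarith)


lemma zero_run (β : ℝ) (j k : ℕ) (h : ∀ i < k, eps β 1 (j + i) = 0) :
    (Tbeta β)^[j + k] 1 = β ^ k * (Tbeta β)^[j] 1 := by
  induction k with
  | zero => simp
  | succ k ih =>
    have ih' := ih (fun i hi => h i (by omega))
    have : j + (k + 1) = (j + k) + 1 := by omega
    rw [this, iter_succ, h k (by omega), ih']
    push_cast
    ring

lemma tseq_bddAbove (β : ℝ) (hβ : 1 < β) (j : ℕ) :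
    BddAbove {k : ℕ | ∀ i < k, eps β 1 (j + i) = 0} := by
  have hT := iter_mem β 1 one_mem_Ioc01 j
  obtain ⟨K, hK⟩ := pow_unbounded_of_one_lt (1 / (Tbeta β)^[j] 1) hβ
  refine ⟨K, fun k hk => ?_⟩
  by_contra hlt

  have h1 : (Tbeta β)^[j + k] 1 = β ^ k * (Tbeta β)^[j] 1 := zero_run β j k hk
  have h2 := (iter_mem β 1 one_mem_Ioc01 (j + k)).2
  have h3 : β ^ K ≤ β ^ k := pow_le_pow_right₀ (by linarith) (by omega)
  have h4 : 1 / (Tbeta β)^[j] 1 < β ^ k := lt_of_lt_of_le hK h3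
  have h5 : 1 < β ^ k * (Tbeta β)^[j] 1 := by
    rw [div_lt_iff₀ hT.1] at h4; linarith
  linarith [h1 ▸ h5]

lemma tseq_mem (β : ℝ) (hβ : 1 < β) (j : ℕ) :
    ∀ i < tseq β j, eps β 1 (j + i) = 0 := by
  have hne : ({k : ℕ | ∀ i < k, eps β 1 (j + i) = 0}).Nonempty := ⟨0, by simp⟩
  have := Nat.sSup_mem hne (tseq_bddAbove β hβ j)
  exact this

lemma tseq_succ_not (β : ℝ) (hβ : 1 < β) (j : ℕ) :
    ¬(∀ i < tseq β j + 1, eps β 1 (j + i) = 0) := by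
  intro h
  have : tseq β j + 1 ≤ tseq β j :=
    le_csSup (tseq_bddAbove β hβ j) h
  omega

/-- digit at position `j + tseq β j` of `1` is nonzero. -/
lemma eps_ne_zero_at_tseq (β : ℝ) (hβ : 1 < β) (j : ℕ) :
    eps β 1 (j + tseq β j) ≠ 0 := by
  intro h
  apply tseq_succ_not β hβ j
  intro i hi
  rcases Nat.lt_succ_iff_lt_or_eq.mp hi with h' | h'
  · exact tseq_mem β hβ j i h'
  · subst h'; exact h

/-- `T^j 1 ≤ β^{-t_j}` -/
lemma iter_one_le (β : ℝ) (hβ : 1 < β) (j : ℕ) :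
    (Tbeta β)^[j] 1 ≤ (β ^ tseq β j)⁻¹ := by
  have h1 : (Tbeta β)^[j + tseq β j] 1 = β ^ tseq β j * (Tbeta β)^[j] 1 :=
    zero_run β j (tseq β j) (tseq_mem β hβ j)
  have h2 := (iter_mem β 1 one_mem_Ioc01 (j + tseq β j)).2
  rw [h1] at h2
  have hp : (0:ℝ) < β ^ tseq β j := pow_pos (by linarith) _
  rw [inv_eq_one_div, le_div_iff₀ hp]
  nlinarith

/-- `β^{-(t_j+1)} < T^j 1` -/
lemma lt_iter_one (β : ℝ) (hβ : 1 < β) (j : ℕ) :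
    (β ^ (tseq β j + 1))⁻¹ < (Tbeta β)^[j] 1 := by
  have h1 : (Tbeta β)^[j + tseq β j] 1 = β ^ tseq β j * (Tbeta β)^[j] 1 :=
    zero_run β j (tseq β j) (tseq_mem β hβ j)
  have hne := eps_ne_zero_at_tseq β hβ j
  have hpos := (iter_mem β 1 one_mem_Ioc01 (j + tseq β j)).1
  have hge : 1 < β * (Tbeta β)^[j + tseq β j] 1 := by
    by_contra hle
    push_neg at hle
    apply hne
    unfold eps
    have hc : ⌈β * (Tbeta β)^[j + tseq β j] 1⌉ = 1 := by
      rw [Int.ceil_eq_iff]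
      constructor
      · push_cast
        have : (0:ℝ) < β * (Tbeta β)^[j + tseq β j] 1 := mul_pos (by linarith) hpos
        linarith
      · push_cast; linarith
    omega
  have hp : (0:ℝ) < β ^ (tseq β j + 1) := pow_pos (by linarith) _
  have hT := (iter_mem β 1 one_mem_Ioc01 j).1
  rw [h1] at hge
  rw [inv_eq_one_div, div_lt_iff₀ hp]
  have : β ^ (tseq β j + 1) = β * β ^ tseq β j := by ring
  nlinarith


lemma cfun_lower (β x : ℝ) (hβ : 1 < β) (hx : x ∈ Ioc (0:ℝ) 1) (n : ℕ) :
    (β ^ (Gam β n + 1))⁻¹ < cfun β x n := by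
  obtain ⟨j, hj, hc⟩ := cfun_exists_iter β x hβ hx n
  have hβ0 : (0:ℝ) < β := by linarith
  have hinvlt1 : (β ^ (Gam β n + 1))⁻¹ < 1 := by
    rw [inv_lt_one_iff₀]
    right
    exact one_lt_pow₀ hβ (by omega)
  rcases Nat.eq_zero_or_pos j with h0 | h1
  · subst h0; simp only [Function.iterate_zero, id_eq] at hc; rw [hc]; exact hinvlt1
  · have htle : tseq β j ≤ Gam β n := Finset.le_sup (Finset.mem_Icc.mpr ⟨h1, hj⟩)
    have : (β ^ (Gam β n + 1))⁻¹ ≤ (β ^ (tseq β j + 1))⁻¹ := by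
      apply inv_anti₀ (pow_pos hβ0 _)
      exact pow_le_pow_right₀ (by linarith) (by omega)
    calc (β ^ (Gam β n + 1))⁻¹ ≤ (β ^ (tseq β j + 1))⁻¹ := this
      _ < (Tbeta β)^[j] 1 := lt_iter_one β hβ j
      _ = cfun β x n := hc.symm

lemma cfun_upper_estar (β x : ℝ) (hβ : 1 < β) (hx : x ∈ Ioc (0:ℝ) 1) (p M : ℕ)
    (h : ∀ i < M, eps β x (p + i) = eps β 1 i) :
    cfun β x (p + M) ≤ (Tbeta β)^[M] 1 := by
  induction M with
  | zero => simpa using cfun_le_one β x p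
  | succ M ih =>
    have ih' := ih (fun i hi => h i (by omega))
    have hTle := (iter_mem β 1 one_mem_Ioc01 (M+1)).2
    have : p + (M + 1) = (p + M) + 1 := by omega
    rw [this]
    show min (β * cfun β x (p+M) - (eps β x (p+M) : ℝ)) 1 ≤ _
    have heq : eps β x (p + M) = eps β 1 M := h M (by omega)
    have h1T : (Tbeta β)^[M+1] 1 = β * (Tbeta β)^[M] 1 - (eps β 1 M : ℝ) := iter_succ β 1 M
    have hmono : β * cfun β x (p+M) - (eps β x (p+M) : ℝ)
        ≤ (Tbeta β)^[M+1] 1 + ((1:ℝ) - 1) := by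
      rw [h1T, heq]
      have : β * cfun β x (p+M) ≤ β * (Tbeta β)^[M] 1 := by nlinarith
      linarith
    rcases le_total (β * cfun β x (p+M) - (eps β x (p+M) : ℝ)) 1 with hle | hle
    · rw [min_eq_left hle]; linarith
    · rw [min_eq_right hle]
      -- 1 ≤ β c - ε ≤ T^{M+1} 1 ≤ 1 so T^{M+1} 1 = 1
      linarith

lemma neg_logb_len (β x : ℝ) (hβ : 1 < β) (hx : x ∈ Ioc (0:ℝ) 1) (n : ℕ) :
    -Real.logb β (len (In β x n)) = n - Real.logb β (cfun β x n) := by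
  have hβ0 : (0:ℝ) < β := by linarith
  have hpn : (0:ℝ) < β ^ n := pow_pos hβ0 n
  have hc : 0 < cfun β x n := cfun_pos β x hβ hx n
  rw [len_In β x hβ hx n, Real.logb_div hc.ne' hpn.ne', Real.logb_pow,
    Real.logb_self_eq_one hβ]
  ring

lemma neg_logb_cfun_bounds (β x : ℝ) (hβ : 1 < β) (hx : x ∈ Ioc (0:ℝ) 1) (n : ℕ) :
    0 ≤ -Real.logb β (cfun β x n) ∧ -Real.logb β (cfun β x n) < (Gam β n : ℝ) + 1 := by
  have hβ0 : (0:ℝ) < β := by linarith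
  have hc : 0 < cfun β x n := cfun_pos β x hβ hx n
  constructor
  · have := Real.logb_nonpos hβ hc.le (cfun_le_one β x n)
    linarith
  · have hlt := cfun_lower β x hβ hx n
    have h2 : Real.logb β ((β ^ (Gam β n + 1))⁻¹) < Real.logb β (cfun β x n) :=
      Real.logb_lt_logb hβ (by positivity) hlt
    rw [Real.logb_inv, Real.logb_pow, Real.logb_self_eq_one hβ] at h2
    push_cast at h2
    linarith

lemma neg_logb_cfun_ge (β x : ℝ) (hβ : 1 < β) (hx : x ∈ Ioc (0:ℝ) 1) (p M : ℕ)
    (h : ∀ i < M, eps β x (p + i) = eps β 1 i) :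
    (tseq β M : ℝ) ≤ -Real.logb β (cfun β x (p + M)) := by
  have hβ0 : (0:ℝ) < β := by linarith
  have hc : 0 < cfun β x (p + M) := cfun_pos β x hβ hx (p + M)
  have h1 : cfun β x (p + M) ≤ (β ^ tseq β M)⁻¹ :=
    le_trans (cfun_upper_estar β x hβ hx p M h) (iter_one_le β hβ M)
  have h2 : Real.logb β (cfun β x (p + M)) ≤ Real.logb β ((β ^ tseq β M)⁻¹) :=
    Real.logb_le_logb_of_le hβ hc h1
  rw [Real.logb_inv, Real.logb_pow, Real.logb_self_eq_one hβ] at h2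
  push_cast at h2
  linarith



lemma gam_bdd (β : ℝ) (hlam : 0 < lam β) :
    Filter.IsBoundedUnder (· ≤ ·) atTop (fun n : ℕ => (Gam β n : ℝ) / n) := by
  by_contra h
  have hempty : {a : ℝ | ∀ᶠ n : ℕ in atTop, (Gam β n : ℝ) / n ≤ a} = ∅ := by
    rw [eq_empty_iff_forall_notMem]
    intro a ha
    exact h ⟨a, by simpa [Filter.eventually_map] using ha⟩
  have : lam β = 0 := by
    unfold lam
    rw [Filter.limsup_eq, hempty, Real.sInf_empty]
  linarith

lemma A_nonneg (β x : ℝ) (hβ : 1 < β) (hx : x ∈ Ioc (0:ℝ) 1) (n : ℕ) :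
    0 ≤ -Real.logb β (len (In β x n)) / n := by
  rcases Nat.eq_zero_or_pos n with h0 | h1
  · subst h0; simp
  · have hb := neg_logb_cfun_bounds β x hβ hx n
    rw [neg_logb_len β x hβ hx n]
    have hn : (0:ℝ) < n := by exact_mod_cast h1
    apply div_nonneg _ hn.le
    linarith [hb.1]

lemma A_le (β x : ℝ) (hβ : 1 < β) (hx : x ∈ Ioc (0:ℝ) 1) (n : ℕ) (h1 : 1 ≤ n) :
    -Real.logb β (len (In β x n)) / n ≤ 1 + (Gam β n : ℝ) / n + 1 / n := by
  have hb := neg_logb_cfun_bounds β x hβ hx n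
  rw [neg_logb_len β x hβ hx n]
  have hn : (0:ℝ) < n := by exact_mod_cast h1
  rw [div_le_iff₀ hn]
  have h2 : (1 + (Gam β n : ℝ) / n + 1 / n) * n = n + (Gam β n : ℝ) + 1 := by
    field_simp
  rw [h2]
  linarith [hb.2]

lemma A_bddAbove (β x : ℝ) (hβ : 1 < β) (hx : x ∈ Ioc (0:ℝ) 1) (hlam : 0 < lam β) :
    Filter.IsBoundedUnder (· ≤ ·) atTop
      (fun n : ℕ => -Real.logb β (len (In β x n)) / n) := by
  obtain ⟨b, hb⟩ := gam_bdd β hlam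
  rw [Filter.eventually_map] at hb
  refine ⟨b + 2, ?_⟩
  rw [Filter.eventually_map]
  filter_upwards [hb, Filter.eventually_ge_atTop 1] with n h1 h2
  have := A_le β x hβ hx n h2
  have hn : (1:ℝ) ≤ (n:ℝ) := by exact_mod_cast h2
  have h1n : 1 / (n:ℝ) ≤ 1 := by
    rw [div_le_one (by linarith)]; linarith
  linarith

lemma upperD_le (β x : ℝ) (hβ : 1 < β) (hx : x ∈ Ioc (0:ℝ) 1) (hlam : 0 < lam β) :
    upperD β x ≤ 1 + lam β := by
  apply le_of_forall_pos_le_add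
  intro ε hε
  unfold upperD
  have hcob : Filter.IsCoboundedUnder (· ≤ ·) atTop
      (fun n : ℕ => -Real.logb β (len (In β x n)) / n) := by
    apply Filter.IsBoundedUnder.isCoboundedUnder_le
    refine ⟨0, ?_⟩
    rw [Filter.eventually_map]
    exact Filter.Eventually.of_forall (fun n => A_nonneg β x hβ hx n)
  apply Filter.limsup_le_of_le hcob
  have hgam : ∀ᶠ n : ℕ in atTop, (Gam β n : ℝ) / n < lam β + ε / 2 := by
    apply Filter.eventually_lt_of_limsup_lt
    · have : lam β < lam β + ε / 2 := by linarith
      exact this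
    · exact gam_bdd β hlam
  have hrec : ∀ᶠ n : ℕ in atTop, (1:ℝ) / n < ε / 2 := by
    have : Tendsto (fun n : ℕ => (1:ℝ) / n) atTop (nhds 0) := tendsto_one_div_atTop_nhds_zero_nat
    have h := (this.eventually (eventually_lt_nhds (show (0:ℝ) < ε/2 by linarith)))
    exact h
  filter_upwards [hgam, hrec, Filter.eventually_ge_atTop 1] with n hg hr h1
  have := A_le β x hβ hx n h1
  linarith




lemma intIn01_subset (S : Set ℝ) : intIn01 S ⊆ S := by
  rintro y ⟨hy1, hy2⟩
  by_contra h
  exact hy2 (subset_closure ⟨hy1, h⟩)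

lemma estarWord_getD (β : ℝ) (M i : ℕ) (hi : i < M) :
    (estarWord β M).getD i 0 = eps β 1 i := by
  unfold estarWord
  have hlen : i < ((List.range M).map (eps β 1)).length := by
    simp [hi]
  rw [List.getD_eq_getElem _ _ hlen]
  simp

lemma digits_of_cyl (β : ℝ) (m : ℕ → ℕ) (k : ℕ) (hk : 1 ≤ k) (w : List ℤ)
    (hw : w.length = k) (x : ℝ)
    (hx : x ∈ cyl β (w ++ List.replicate (Gam β k + 1) 0 ++
      ((List.range k).map (fun j =>
        estarWord β (m (j + 1)) ++ List.replicate (tseq β (m (j + 1)) + 1) 0)).flatten)) :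
    ∀ i < m k,
      eps β x ((k + (Gam β k + 1) +
        ∑ j ∈ Finset.range (k-1), (m (j+1) + (tseq β (m (j+1)) + 1))) + i) = eps β 1 i := by
  obtain ⟨hx01, hdig⟩ := hx
  set f : ℕ → List ℤ := fun j =>
    estarWord β (m (j + 1)) ++ List.replicate (tseq β (m (j + 1)) + 1) 0 with hf
  have hflen : ∀ j, (f j).length = m (j+1) + (tseq β (m (j+1)) + 1) := by
    intro j
    simp [hf, estarWord]
  have hJlen : ∀ r, (((List.range r).map f).flatten).length
      = ∑ j ∈ Finset.range r, (m (j+1) + (tseq β (m (j+1)) + 1)) := by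
    intro r
    induction r with
    | zero => simp
    | succ r ih =>
      rw [List.range_succ, List.map_append, List.flatten_append, List.length_append,
        Finset.sum_range_succ, ih]
      simp [hflen]
  have hk' : k - 1 + 1 = k := by omega
  have hjoin : ((List.range k).map f).flatten
      = ((List.range (k-1)).map f).flatten ++ f (k-1) := by
    conv_lhs => rw [← hk']
    rw [List.range_succ, List.map_append, List.flatten_append]
    simp
  set Z : List ℤ := List.replicate (Gam β k + 1) 0 with hZ
  set Jprev : List ℤ := ((List.range (k-1)).map f).flatten with hJ
  set E : List ℤ := estarWord β (m k) with hE
  set Zk : List ℤ := List.replicate (tseq β (m k) + 1) 0 with hZk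
  have hfk : f (k-1) = E ++ Zk := by rw [hf]; simp [hk', hE, hZk]
  have hWeq : w ++ Z ++ ((List.range k).map f).flatten = (w ++ Z) ++ (Jprev ++ (E ++ Zk)) := by
    rw [hjoin, hfk]
  have hwZlen : (w ++ Z).length = k + (Gam β k + 1) := by
    simp [hZ, hw]
  have hJplen : Jprev.length = ∑ j ∈ Finset.range (k-1), (m (j+1) + (tseq β (m (j+1)) + 1)) :=
    hJlen (k-1)
  have hElen : E.length = m k := by simp [hE, estarWord]
  intro i hi
  set Q : ℕ := k + (Gam β k + 1) +
    ∑ j ∈ Finset.range (k-1), (m (j+1) + (tseq β (m (j+1)) + 1)) with hQ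
  have hlenW : (w ++ Z ++ ((List.range k).map f).flatten).length
      = Q + (m k + (tseq β (m k) + 1)) := by
    rw [hWeq]
    simp only [List.length_append, hwZlen, hJplen, hElen, hZk, List.length_replicate]
    omega
  have hlt : Q + i < (w ++ Z ++ ((List.range k).map f).flatten).length := by
    rw [hlenW]; omega
  have hd := hdig (Q + i) hlt
  rw [hd, hWeq]
  rw [List.getD_append_right _ _ _ _ (by rw [hwZlen]; omega)]
  rw [hwZlen]
  have harith : Q + i - (k + (Gam β k + 1)) = Jprev.length + i := by
    rw [hJplen]; omega
  rw [harith]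
  rw [List.getD_append_right _ _ _ _ (by omega)]
  have : Jprev.length + i - Jprev.length = i := by omega
  rw [this]
  rw [List.getD_append _ _ _ _ (by rw [hElen]; omega)]
  exact estarWord_getD β (m k) i hi

lemma sum_Icc_one_eq (g : ℕ → ℝ) (r : ℕ) :
    ∑ j ∈ Finset.Icc 1 r, g j = ∑ j ∈ Finset.range r, g (j+1) := by
  induction r with
  | zero => simp
  | succ r ih =>
    rw [Finset.sum_Icc_succ_top (by omega) g, Finset.sum_range_succ, ih]



/-- Suppose `λ(β) > 0` and `(m_k)_{k ≥ 1}` is an increasing sequence of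
positive integers with `lim_k t_{m_k}/m_k = λ(β)` and
`lim_k (k + Γ_k + 1 + Σ_{j=1}^{k−1}(m_j + t_{m_j} + 1))/m_k = 0`. Setting
`ω_k = (ε*_1,…,ε*_{m_k}, 0^{t_{m_k}+1})` and
`U = ∩_{n≥1} ∪_{k≥n} ∪_{(ε_1,…,ε_k) admissible} int(I(ε_1,…,ε_k, 0^{Γ_k+1}, ω_1,…,ω_k))`
(interiors in `[0,1]`), every `x ∈ U` satisfies
`limsup_n (−log_β |I_n(x)|)/n = 1 + λ(β)`, i.e. `U ⊆ E`. -/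
theorem U_subset_E (β : ℝ) (hβ : 1 < β) (hlam : 0 < lam β)
    (m : ℕ → ℕ) (hmono : StrictMono m) (hpos : ∀ k, 0 < m k)
    (h1 : Tendsto (fun k => (tseq β (m k) : ℝ) / (m k : ℝ)) atTop (nhds (lam β)))
    (h2 : Tendsto (fun k : ℕ =>
        ((k : ℝ) + (Gam β k : ℝ) + 1 +
            ∑ j ∈ Finset.Icc 1 (k - 1), ((m j : ℝ) + (tseq β (m j) : ℝ) + 1)) / (m k : ℝ))
      atTop (nhds 0)) :
    (⋂ n : ℕ, ⋃ k : ℕ, ⋃ (_ : n ≤ k ∧ 1 ≤ k), ⋃ w : List ℤ,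
        ⋃ (_ : w.length = k ∧ Admissible β w),
          intIn01 (cyl β (w ++ List.replicate (Gam β k + 1) 0 ++
            ((List.range k).map (fun j =>
              estarWord β (m (j + 1)) ++ List.replicate (tseq β (m (j + 1)) + 1) 0)).flatten)))
      ⊆ {x ∈ Ioc (0:ℝ) 1 | upperD β x = 1 + lam β} := by
  intro x hx
  simp only [mem_iInter, mem_iUnion] at hx
  -- unpack a witness for level n
  have hwit : ∀ n : ℕ, ∃ k, n ≤ k ∧ 1 ≤ k ∧ ∃ w : List ℤ, w.length = k ∧
      x ∈ cyl β (w ++ List.replicate (Gam β k + 1) 0 ++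
        ((List.range k).map (fun j =>
          estarWord β (m (j + 1)) ++ List.replicate (tseq β (m (j + 1)) + 1) 0)).flatten) := by
    intro n
    obtain ⟨k, ⟨hnk, hk1⟩, w, ⟨hwl, -⟩, hmem⟩ := hx n
    exact ⟨k, hnk, hk1, w, hwl, intIn01_subset _ hmem⟩
  have hx01 : x ∈ Ioc (0:ℝ) 1 := by
    obtain ⟨k, -, -, w, -, hmem⟩ := hwit 0
    exact hmem.1
  refine ⟨hx01, le_antisymm (upperD_le β x hβ hx01 hlam) ?_⟩
  -- the Q-sequence (natural number version of h2's numerator)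
  set QN : ℕ → ℕ := fun k => k + (Gam β k + 1) +
    ∑ j ∈ Finset.range (k-1), (m (j+1) + (tseq β (m (j+1)) + 1)) with hQN
  have hQcast : ∀ k : ℕ, 1 ≤ k → ((QN k : ℝ)) =
      (k : ℝ) + (Gam β k : ℝ) + 1 +
        ∑ j ∈ Finset.Icc 1 (k - 1), ((m j : ℝ) + (tseq β (m j) : ℝ) + 1) := by
    intro k hk
    rw [hQN]
    push_cast
    rw [sum_Icc_one_eq (fun j => (m j : ℝ) + (tseq β (m j) : ℝ) + 1) (k-1)]
    rw [Finset.sum_congr rfl (fun (j : ℕ) (_ : j ∈ Finset.range (k-1)) =>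
      (by ring : (m (j+1) : ℝ) + ((tseq β (m (j+1)) : ℝ) + 1)
        = (m (j+1) : ℝ) + (tseq β (m (j+1)) : ℝ) + 1))]
    ring
  -- the ratio tends to lam
  have hnum_nonneg : ∀ k : ℕ, (0:ℝ) ≤ (k : ℝ) + (Gam β k : ℝ) + 1 +
      ∑ j ∈ Finset.Icc 1 (k - 1), ((m j : ℝ) + (tseq β (m j) : ℝ) + 1) := by
    intro k
    have : (0:ℝ) ≤ ∑ j ∈ Finset.Icc 1 (k - 1), ((m j : ℝ) + (tseq β (m j) : ℝ) + 1) :=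
      Finset.sum_nonneg (fun j _ => by positivity)
    positivity
  set num : ℕ → ℝ := fun k => (k : ℝ) + (Gam β k : ℝ) + 1 +
      ∑ j ∈ Finset.Icc 1 (k - 1), ((m j : ℝ) + (tseq β (m j) : ℝ) + 1) with hnum
  have hratio : Tendsto (fun k : ℕ => (tseq β (m k) : ℝ) / (num k + (m k : ℝ)))
      atTop (nhds (lam β)) := by
    have heq : ∀ k : ℕ, (tseq β (m k) : ℝ) / (num k + (m k : ℝ))
        = ((tseq β (m k) : ℝ) / (m k : ℝ)) * ((num k / (m k : ℝ) + 1)⁻¹) := by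
      intro k
      have hm : (0:ℝ) < (m k : ℝ) := by exact_mod_cast hpos k
      have hnn : (0:ℝ) ≤ num k := hnum_nonneg k
      field_simp
    have h3 : Tendsto (fun k : ℕ => (num k / (m k : ℝ) + 1)⁻¹) atTop (nhds 1) := by
      have := (h2.add (tendsto_const_nhds (x := (1:ℝ)))).inv₀ (by norm_num)
      simpa using this
    have := h1.mul h3
    rw [mul_one] at this
    exact this.congr (fun k => (heq k).symm)
  -- conclude lower bound on the limsup
  have hlow : ∀ ε : ℝ, 0 < ε → 1 + lam β ≤ upperD β x + ε := by
    intro ε hε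
    have hfreq : ∃ᶠ n : ℕ in atTop,
        1 + lam β - ε ≤ -Real.logb β (len (In β x n)) / n := by
      rw [Filter.frequently_atTop]
      intro N
      have hev : ∀ᶠ k : ℕ in atTop,
          lam β - ε < (tseq β (m k) : ℝ) / (num k + (m k : ℝ)) :=
        hratio.eventually (eventually_gt_nhds (by linarith))
      obtain ⟨K, hK⟩ := Filter.eventually_atTop.mp hev
      obtain ⟨k, hnk, hk1, w, hwl, hmem⟩ := hwit (max N K)
      have hdig := digits_of_cyl β m k hk1 w hwl x hmem
      set n := QN k + m k with hn
      have hmk1 : 1 ≤ m k := hpos k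
      have hn1 : 1 ≤ n := by omega
      have hnR : (0:ℝ) < (n:ℝ) := by exact_mod_cast hn1
      refine ⟨n, ?_, ?_⟩
      · -- n ≥ N
        have : k ≤ m k := hmono.le_apply
        omega
      · -- the estimate
        have hge := neg_logb_cfun_ge β x hβ hx01 (QN k) (m k) hdig
        have hlen := neg_logb_len β x hβ hx01 n
        have hnQ : (n:ℝ) = num k + (m k : ℝ) := by
          rw [hn]
          push_cast
          rw [hQcast k hk1, hnum]
        have hKk : lam β - ε < (tseq β (m k) : ℝ) / (num k + (m k : ℝ)) :=
          hK k (le_trans (le_max_right N K) hnk)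
        rw [← hnQ] at hKk
        have hmid : 1 + lam β - ε ≤ ((n:ℝ) + (tseq β (m k) : ℝ)) / n := by
          rw [lt_div_iff₀ hnR] at hKk
          rw [le_div_iff₀ hnR]
          nlinarith
        have hfinal : ((n:ℝ) + (tseq β (m k) : ℝ)) / n
            ≤ -Real.logb β (len (In β x n)) / n := by
          rw [hlen]
          gcongr
          linarith
        linarith
    have hbdd := A_bddAbove β x hβ hx01 hlam
    have hll := Filter.le_limsup_of_frequently_le hfreq hbdd
    unfold upperD
    linarith
  exact le_of_forall_pos_le_add hlow
end
end

section
/- Let (ε_1,…,ε_n) be an admissible word with n ≥ 1 and let k_n* = inf{k ≥ 0 : (ε_{k+1},…,ε_n) = (ε*_1,…,ε*_{n−k})}. Then the length of the basic interval satisfies |I(ε_1,…,ε_n)| = β^{−k_n*} · |I(ε*_1,…,ε*_{n−k_n*})|. -/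
open MeasureTheory Filter Set

noncomputable section

/-- `k_n^*` for a finite word `w = (ε_1,…,ε_n)`: the smallest `k ≥ 0` with
`(ε_{k+1},…,ε_n) = (ε*_1,…,ε*_{n−k})`. -/
def kstarWord (β : ℝ) (w : List ℤ) : ℕ :=
  sInf {k : ℕ | ∀ i < w.length - k, w.getD (k + i) 0 = eps β 1 i}

namespace BetaAux

lemma Tbeta_mem (β x : ℝ) : Tbeta β x ∈ Ioc (0:ℝ) 1 := by
  unfold Tbeta
  constructor
  · have := Int.ceil_lt_add_one (β * x); linarith
  · have := Int.le_ceil (β * x); linarith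

lemma iter_mem {β x : ℝ} (hx : x ∈ Ioc (0:ℝ) 1) (k : ℕ) :
    (Tbeta β)^[k] x ∈ Ioc (0:ℝ) 1 := by
  induction k with
  | zero => simpa
  | succ k ih => rw [Function.iterate_succ_apply']; exact Tbeta_mem β _

/-- partial sums of the value of the word -/
def cval (β : ℝ) (w : List ℤ) (k : ℕ) : ℝ :=
  ∑ i ∈ Finset.range k, (w.getD i 0 : ℝ) * β ^ (-(i:ℤ) - 1)

lemma cval_succ (β : ℝ) (w : List ℤ) (k : ℕ) :
    cval β w (k+1) = cval β w k + (w.getD k 0 : ℝ) * β ^ (-(k:ℤ) - 1) := by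
  unfold cval; rw [Finset.sum_range_succ]

lemma cval_mono {β : ℝ} (hβ : 0 < β) {w : List ℤ}
    (hnn : ∀ i < w.length, 0 ≤ w.getD i 0) {k l : ℕ} (hkl : k ≤ l) (hl : l ≤ w.length) :
    cval β w k ≤ cval β w l := by
  apply Finset.sum_le_sum_of_subset_of_nonneg (Finset.range_subset_range.mpr hkl)
  intro i hi _
  have hi' : i < w.length := lt_of_lt_of_le (Finset.mem_range.mp hi) hl
  have h1 : (0:ℝ) ≤ (w.getD i 0 : ℝ) := by exact_mod_cast hnn i hi'
  have h2 : (0:ℝ) ≤ β ^ (-(i:ℤ) - 1) := le_of_lt (zpow_pos hβ _)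
  exact mul_nonneg h1 h2

def Sfun (β : ℝ) (w : List ℤ) (k : ℕ) (x : ℝ) : ℝ := β ^ (k:ℤ) * (x - cval β w k)

lemma Sfun_zero (β : ℝ) (w : List ℤ) (x : ℝ) : Sfun β w 0 x = x := by
  simp [Sfun, cval]

lemma Sfun_succ {β : ℝ} (hβ : β ≠ 0) (w : List ℤ) (k : ℕ) (x : ℝ) :
    Sfun β w (k+1) x = β * Sfun β w k x - (w.getD k 0 : ℝ) := by
  unfold Sfun
  rw [cval_succ]
  have e1 : β ^ (((k+1:ℕ)):ℤ) = β * β ^ (k:ℤ) := by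
    push_cast
    rw [zpow_add_one₀ hβ]; ring
  have e2 : β ^ (((k+1:ℕ)):ℤ) * β ^ (-(k:ℤ) - 1) = 1 := by
    rw [← zpow_add₀ hβ]
    push_cast
    norm_num
  linear_combination (x - cval β w k) * e1 - (w.getD k 0 : ℝ) * e2

lemma ceil_digit {r : ℝ} {d : ℤ} (h : r - (d:ℝ) ∈ Ioc (0:ℝ) 1) : ⌈r⌉ = d + 1 := by
  rw [Int.ceil_eq_iff]
  obtain ⟨h1, h2⟩ := h
  constructor
  · push_cast; linarith
  · push_cast; linarith

end BetaAux
namespace BetaAux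

lemma iter_eq_S {β x : ℝ} (hβ : 0 < β) {w : List ℤ} (hx : x ∈ cyl β w) :
    ∀ k ≤ w.length, (Tbeta β)^[k] x = Sfun β w k x := by
  intro k
  induction k with
  | zero => intro _; simp [Sfun_zero]
  | succ k ih =>
    intro hk
    have hk' : k ≤ w.length := Nat.le_of_succ_le hk
    have hkw : k < w.length := hk
    rw [Function.iterate_succ_apply', ih hk']
    have hd : eps β x k = w.getD k 0 := hx.2 k hkw
    unfold eps at hd
    rw [ih hk'] at hd
    unfold Tbeta
    rw [Sfun_succ (ne_of_gt hβ)]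
    have : (⌈β * Sfun β w k x⌉ : ℝ) = (w.getD k 0 : ℝ) + 1 := by
      have h2 : (⌈β * Sfun β w k x⌉ : ℤ) = w.getD k 0 + 1 := by omega
      exact_mod_cast h2
    rw [this]; ring

lemma mem_cyl_iff {β : ℝ} (hβ : 0 < β) (w : List ℤ) (x : ℝ) :
    x ∈ cyl β w ↔ ∀ k ≤ w.length, Sfun β w k x ∈ Ioc (0:ℝ) 1 := by
  constructor
  · intro hx k hk
    rw [← iter_eq_S hβ hx k hk]
    exact iter_mem hx.1 k
  · intro hS
    have key : ∀ k ≤ w.length, (Tbeta β)^[k] x = Sfun β w k x := by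
      intro k
      induction k with
      | zero => intro _; simp [Sfun_zero]
      | succ k ih =>
        intro hk
        have hk' : k ≤ w.length := Nat.le_of_succ_le hk
        rw [Function.iterate_succ_apply', ih hk']
        have hceil : ⌈β * Sfun β w k x⌉ = w.getD k 0 + 1 := by
          apply ceil_digit
          have := hS (k+1) hk
          rw [Sfun_succ (ne_of_gt hβ)] at this
          exact this
        unfold Tbeta
        rw [hceil, Sfun_succ (ne_of_gt hβ)]
        push_cast
        ring
    have hx0 : x ∈ Ioc (0:ℝ) 1 := by
      have := hS 0 (Nat.zero_le _)
      rwa [Sfun_zero] at this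
    refine ⟨hx0, fun j hj => ?_⟩
    unfold eps
    rw [key j (le_of_lt hj)]
    have hceil : ⌈β * Sfun β w j x⌉ = w.getD j 0 + 1 := by
      apply ceil_digit
      have := hS (j+1) hj
      rw [Sfun_succ (ne_of_gt hβ)] at this
      exact this
    omega

lemma S_mem_iff {β : ℝ} (hβ : 0 < β) (w : List ℤ) (k : ℕ) (x : ℝ) :
    Sfun β w k x ∈ Ioc (0:ℝ) 1 ↔
      (cval β w k < x ∧ x ≤ cval β w k + β ^ (-(k:ℤ))) := by
  have hp : (0:ℝ) < β ^ (k:ℤ) := zpow_pos hβ _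
  have hip : (0:ℝ) < β ^ (-(k:ℤ)) := zpow_pos hβ _
  have hmul : β ^ (k:ℤ) * β ^ (-(k:ℤ)) = 1 := by
    rw [← zpow_add₀ (ne_of_gt hβ)]; simp
  unfold Sfun
  constructor
  · rintro ⟨h1, h2⟩
    constructor
    · nlinarith
    · nlinarith
  · rintro ⟨h1, h2⟩
    constructor
    · nlinarith
    · nlinarith

lemma cyl_eq_Ioc {β : ℝ} (hβ : 0 < β) (w : List ℤ)
    (hnn : ∀ i < w.length, 0 ≤ w.getD i 0) :
    cyl β w = Ioc (cval β w w.length)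
      (Finset.inf' (Finset.range (w.length+1)) (by simp) 
        (fun k => cval β w k + β ^ (-(k:ℤ)))) := by
  ext x
  rw [mem_cyl_iff hβ]
  simp only [mem_Ioc, Finset.le_inf'_iff, Finset.mem_range, Nat.lt_succ_iff]
  constructor
  · intro h
    refine ⟨((S_mem_iff hβ w _ x).mp (h w.length le_rfl)).1, fun k hk => 
      ((S_mem_iff hβ w k x).mp (h k hk)).2⟩
  · rintro ⟨h1, h2⟩ k hk
    exact (S_mem_iff hβ w k x).mpr ⟨lt_of_le_of_lt (cval_mono hβ hnn hk le_rfl) h1, h2 k hk⟩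

end BetaAux
namespace BetaAux

lemma estar_length (β : ℝ) (m : ℕ) : (estarWord β m).length = m := by
  simp [estarWord]

lemma estar_getD (β : ℝ) {m i : ℕ} (hi : i < m) :
    (estarWord β m).getD i 0 = eps β 1 i := by
  have hlen : i < (estarWord β m).length := by rw [estar_length]; exact hi
  rw [List.getD_eq_getElem _ _ hlen]
  simp [estarWord]

lemma eps_nonneg {β x : ℝ} (hβ : 0 < β) (hx : x ∈ Ioc (0:ℝ) 1) (i : ℕ) :
    0 ≤ eps β x i := by
  have hmem := iter_mem (β := β) hx i
  have hpos : 0 < β * (Tbeta β)^[i] x := mul_pos hβ hmem.1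
  have := Int.ceil_pos.mpr hpos
  unfold eps
  omega

lemma cval_shift {β : ℝ} (hβ : β ≠ 0) {w : List ℤ} {K m : ℕ}
    (htail : ∀ i < m, w.getD (K + i) 0 = eps β 1 i) :
    ∀ d ≤ m, cval β w (K + d) = cval β w K + β ^ (-(K:ℤ)) * cval β (estarWord β m) d := by
  intro d
  induction d with
  | zero => intro _; simp [cval]
  | succ d ih =>
    intro hd
    have hd' : d ≤ m := Nat.le_of_succ_le hd
    have hdm : d < m := hd
    rw [show K + (d+1) = (K + d) + 1 from rfl, cval_succ, ih hd', cval_succ]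
    have hw : w.getD (K + d) 0 = (estarWord β m).getD d 0 := by
      rw [htail d hdm, estar_getD β hdm]
    rw [hw]
    have hz : β ^ (-((K + d : ℕ):ℤ) - 1) = β ^ (-(K:ℤ)) * β ^ (-(d:ℤ) - 1) := by
      rw [← zpow_add₀ hβ]
      push_cast
      ring_nf
    rw [hz]
    ring

end BetaAux
namespace BetaAux

lemma cyl_eq_Ioc' {β : ℝ} (hβ : 0 < β) (w : List ℤ) {n : ℕ} (hlen : w.length = n)
    (hnn : ∀ i < w.length, 0 ≤ w.getD i 0) (H : (Finset.range (n+1)).Nonempty) :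
    cyl β w = Ioc (cval β w n)
      (Finset.inf' (Finset.range (n+1)) H (fun k => cval β w k + β ^ (-(k:ℤ)))) := by
  subst hlen
  exact cyl_eq_Ioc hβ w hnn

end BetaAux
open BetaAux

/-- Let `(ε_1,…,ε_n)` be an admissible word, `n ≥ 1`, and let
`k_n^* = inf{k ≥ 0 : (ε_{k+1},…,ε_n) = (ε*_1,…,ε*_{n−k})}`. Then
`|I(ε_1,…,ε_n)| = β^{−k_n^*} · |I(ε*_1,…,ε*_{n−k_n^*})|`. -/
theorem len_cyl_eq_kstar (β : ℝ) (hβ : 1 < β) (w : List ℤ)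
    (hn : 1 ≤ w.length) (hadm : Admissible β w) :
    len (cyl β w)
      = β ^ (-(kstarWord β w : ℤ)) * len (cyl β (estarWord β (w.length - kstarWord β w))) := by
  have hβ0 : (0:ℝ) < β := lt_trans one_pos hβ
  have hβne : β ≠ 0 := ne_of_gt hβ0
  obtain ⟨x₀, hx₀⟩ := hadm
  have hwnn : ∀ i < w.length, 0 ≤ w.getD i 0 := by
    intro i hi
    rw [← hx₀.2 i hi]
    exact eps_nonneg hβ0 hx₀.1 i
  set n := w.length with hn'
  set K := kstarWord β w with hK'
  have hKset : n ∈ {k : ℕ | ∀ i < n - k, w.getD (k + i) 0 = eps β 1 i} := by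
    simp only [Set.mem_setOf_eq]
    intro i hi
    exact absurd hi (by omega)
  have hKmem : K ∈ {k : ℕ | ∀ i < n - k, w.getD (k + i) 0 = eps β 1 i} :=
    Nat.sInf_mem ⟨n, hKset⟩
  have hKle : K ≤ n := Nat.sInf_le hKset
  set m := n - K with hm'
  have hKmn : K + m = n := by omega
  have htail : ∀ i < m, w.getD (K + i) 0 = eps β 1 i := hKmem
  set u := estarWord β m with hu'
  have hulen : u.length = m := estar_length β m
  have hunn : ∀ i < u.length, 0 ≤ u.getD i 0 := by
    intro i hi
    rw [hulen] at hi
    rw [hu', estar_getD β hi]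
    exact eps_nonneg hβ0 ⟨one_pos, le_rfl⟩ i
  have hne1 : (Finset.range (n+1)).Nonempty := ⟨0, by simp⟩
  have hne2 : (Finset.range (m+1)).Nonempty := ⟨0, by simp⟩
  set M := Finset.inf' (Finset.range (n+1)) hne1 (fun k => cval β w k + β ^ (-(k:ℤ))) with hM
  set M' := Finset.inf' (Finset.range (m+1)) hne2 (fun k => cval β u k + β ^ (-(k:ℤ))) with hM'
  have hcylw : cyl β w = Ioc (cval β w n) M := cyl_eq_Ioc' hβ0 w hn'.symm hwnn hne1
  have hcylu : cyl β u = Ioc (cval β u m) M' := cyl_eq_Ioc' hβ0 u hulen hunn hne2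
  have hx₀' : x₀ ∈ Ioc (cval β w n) M := hcylw ▸ hx₀
  have hlt : cval β w n < M := lt_of_lt_of_le hx₀'.1 hx₀'.2
  have hMmem : M ∈ cyl β w := by rw [hcylw]; exact ⟨hlt, le_rfl⟩
  -- min attained
  obtain ⟨k₀, hk₀r, hk₀⟩ := Finset.exists_mem_eq_inf' hne1 (fun k => cval β w k + β ^ (-(k:ℤ)))
  rw [← hM] at hk₀
  have hk₀n : k₀ ≤ n := Nat.lt_succ_iff.mp (Finset.mem_range.mp hk₀r)
  have hTM : (Tbeta β)^[k₀] M = 1 := by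
    rw [iter_eq_S hβ0 hMmem k₀ hk₀n]
    show β ^ (k₀:ℤ) * (M - cval β w k₀) = 1
    rw [hk₀]
    have hz : β ^ (k₀:ℤ) * β ^ (-(k₀:ℤ)) = 1 := by rw [← zpow_add₀ hβne]; simp
    linear_combination hz
  have hk₀K : K ≤ k₀ := by
    have hmem : k₀ ∈ {k : ℕ | ∀ i < n - k, w.getD (k + i) 0 = eps β 1 i} := by
      simp only [Set.mem_setOf_eq]
      intro i hi
      have hin : k₀ + i < n := by omega
      rw [← hMmem.2 (k₀ + i) hin]
      unfold eps
      rw [add_comm k₀ i, Function.iterate_add_apply, hTM]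
    exact Nat.sInf_le hmem
  -- the shift relation
  have hshift := cval_shift hβne htail
  rw [← hu'] at hshift
  have hcvn : cval β w n = cval β w K + β ^ (-(K:ℤ)) * cval β u m := by
    have h := hshift m le_rfl
    rw [hKmn] at h
    exact h
  have hrel : ∀ d ≤ m, cval β w (K + d) + β ^ (-((K + d : ℕ):ℤ)) - cval β w n
      = β ^ (-(K:ℤ)) * (cval β u d + β ^ (-(d:ℤ)) - cval β u m) := by
    intro d hd
    have h1 := hshift d hd
    have h2 : β ^ (-((K + d : ℕ):ℤ)) = β ^ (-(K:ℤ)) * β ^ (-(d:ℤ)) := by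
      rw [← zpow_add₀ hβne]
      push_cast
      ring_nf
    rw [h1, h2, hcvn]
    ring
  have hMle : ∀ k, k ∈ Finset.range (n+1) → M ≤ cval β w k + β ^ (-(k:ℤ)) := by
    intro k hk
    exact Finset.inf'_le _ hk
  have hM'le : ∀ k, k ∈ Finset.range (m+1) → M' ≤ cval β u k + β ^ (-(k:ℤ)) := by
    intro k hk
    exact Finset.inf'_le _ hk
  obtain ⟨k₁, hk₁r, hk₁⟩ := Finset.exists_mem_eq_inf' hne2 (fun k => cval β u k + β ^ (-(k:ℤ)))
  rw [← hM'] at hk₁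
  have hk₁m : k₁ ≤ m := Nat.lt_succ_iff.mp (Finset.mem_range.mp hk₁r)
  have hKpos : (0:ℝ) < β ^ (-(K:ℤ)) := zpow_pos hβ0 _
  have key : M - cval β w n = β ^ (-(K:ℤ)) * (M' - cval β u m) := by
    apply le_antisymm
    · have h1 : M ≤ cval β w (K + k₁) + β ^ (-((K + k₁ : ℕ):ℤ)) :=
        hMle (K + k₁) (Finset.mem_range.mpr (by omega))
      have h2 := hrel k₁ hk₁m
      rw [← hk₁] at h2
      linarith
    · have hd : k₀ - K ≤ m := by omega
      have hKd : K + (k₀ - K) = k₀ := by omega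
      have h2 := hrel (k₀ - K) hd
      rw [hKd, ← hk₀] at h2
      have h3 : M' ≤ cval β u (k₀ - K) + β ^ (-((k₀ - K : ℕ):ℤ)) :=
        hM'le _ (Finset.mem_range.mpr (by omega))
      rw [h2]
      have := mul_le_mul_of_nonneg_left (by linarith : M' - cval β u m ≤ cval β u (k₀ - K) + β ^ (-((k₀ - K : ℕ):ℤ)) - cval β u m) (le_of_lt hKpos)
      linarith
  have hpos : 0 < M - cval β w n := by linarith
  have hpos' : 0 < M' - cval β u m := by nlinarith [key, hKpos, hpos]
  have hlenw : len (cyl β w) = M - cval β w n := by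
    rw [hcylw]
    unfold len
    rw [Real.volume_Ioc, ENNReal.toReal_ofReal (le_of_lt hpos)]
  have hlenu : len (cyl β u) = M' - cval β u m := by
    rw [hcylu]
    unfold len
    rw [Real.volume_Ioc, ENNReal.toReal_ofReal (le_of_lt hpos')]
  rw [hlenw, hlenu]
  exact key
end
end
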